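/- For b > 0, the function a ↦ C(a,b) = Q(a) + exp((2-2ab)/b²)·Q((2-ab)/b) is strictly decreasing in a, with lim_{a→-∞} C(a,b) = 1 and lim_{a→∞} C(a,b) = 0. -/

import Mathlib

open MeasureTheory Filter

/-- The Gaussian tail function `Q(x) = (1/√(2π)) ∫_x^∞ e^{-t²/2} dt`. -/
noncomputable def gaussQ (x : ℝ) : ℝ :=
  (1 / Real.sqrt (2 * Real.pi)) * ∫ t in Set.Ioi x, Real.exp (-t ^ 2 / 2)

lemma gauss_integrable : Integrable (fun t : ℝ => Real.exp (-t ^ 2 / 2)) := by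
  have h := integrable_exp_neg_mul_sq (b := (1:ℝ)/2) (by norm_num)
  convert h using 2 with t
  ring_nf

lemma gauss_split (x : ℝ) :
    (∫ t in Set.Ioi x, Real.exp (-t ^ 2 / 2)) =
      (∫ t in Set.Ioi (0:ℝ), Real.exp (-t ^ 2 / 2)) -
        ∫ t in (0:ℝ)..x, Real.exp (-t ^ 2 / 2) := by
  rcases le_or_gt 0 x with h | h
  · rw [intervalIntegral.integral_of_le h, ← Set.Ioc_union_Ioi_eq_Ioi h,
      setIntegral_union (Set.Ioc_disjoint_Ioi le_rfl) measurableSet_Ioi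
        gauss_integrable.integrableOn gauss_integrable.integrableOn]
    ring
  · rw [intervalIntegral.integral_of_ge h.le, ← Set.Ioc_union_Ioi_eq_Ioi h.le,
      setIntegral_union (Set.Ioc_disjoint_Ioi le_rfl) measurableSet_Ioi
        gauss_integrable.integrableOn gauss_integrable.integrableOn]
    ring

lemma gauss_cont : Continuous (fun t : ℝ => Real.exp (-t ^ 2 / 2)) := by
  continuity

lemma hasDerivAt_gaussQ (x : ℝ) :
    HasDerivAt gaussQ (-(1 / Real.sqrt (2 * Real.pi) * Real.exp (-x ^ 2 / 2))) x := by
  have h : HasDerivAt (fun u : ℝ => ∫ t in (0:ℝ)..u, Real.exp (-t ^ 2 / 2))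
      (Real.exp (-x ^ 2 / 2)) x :=
    intervalIntegral.integral_hasDerivAt_right gauss_integrable.intervalIntegrable
      gauss_cont.aestronglyMeasurable.stronglyMeasurableAtFilter gauss_cont.continuousAt
  have h2 : HasDerivAt (fun u : ℝ =>
      (1 / Real.sqrt (2 * Real.pi)) *
        ((∫ t in Set.Ioi (0:ℝ), Real.exp (-t ^ 2 / 2)) - ∫ t in (0:ℝ)..u, Real.exp (-t ^ 2 / 2)))
      ((1 / Real.sqrt (2 * Real.pi)) * (0 - Real.exp (-x ^ 2 / 2))) x :=
    ((hasDerivAt_const x _).sub h).const_mul _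
  have : (fun u : ℝ =>
      (1 / Real.sqrt (2 * Real.pi)) *
        ((∫ t in Set.Ioi (0:ℝ), Real.exp (-t ^ 2 / 2)) - ∫ t in (0:ℝ)..u, Real.exp (-t ^ 2 / 2)))
      = gaussQ := by
    funext u; rw [gaussQ, gauss_split u]
  rw [this] at h2
  convert h2 using 1; ring

lemma sqrtpi_pos : 0 < Real.sqrt (2 * Real.pi) :=
  Real.sqrt_pos.2 (by positivity)

lemma gaussQ_pos (x : ℝ) : 0 < gaussQ x := by
  have : 0 < ∫ t in Set.Ioi x, Real.exp (-t ^ 2 / 2) := by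
    rw [setIntegral_pos_iff_support_of_nonneg_ae
      (Filter.Eventually.of_forall fun t => (Real.exp_pos _).le)
      gauss_integrable.integrableOn]
    have : (Function.support fun t : ℝ => Real.exp (-t ^ 2 / 2)) = Set.univ := by
      ext t; simp [Function.support, (Real.exp_pos _).ne']
    rw [this, Set.univ_inter]
    simp [Real.volume_Ioi]
  rw [gaussQ]; positivity

lemma gaussQ_le_one (x : ℝ) : gaussQ x ≤ 1 := by
  have h1 : (∫ t in Set.Ioi x, Real.exp (-t ^ 2 / 2)) ≤ ∫ t : ℝ, Real.exp (-t ^ 2 / 2) :=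
    setIntegral_le_integral gauss_integrable
      (Filter.Eventually.of_forall fun t => (Real.exp_pos _).le)
  have h2 : (∫ t : ℝ, Real.exp (-t ^ 2 / 2)) = Real.sqrt (2 * Real.pi) := by
    have := integral_gaussian (1/2)
    rw [show Real.pi / (1/2) = 2 * Real.pi by ring] at this
    rw [← this]
    congr 1 with t; ring_nf
  rw [gaussQ]
  calc (1 / Real.sqrt (2 * Real.pi)) * ∫ t in Set.Ioi x, Real.exp (-t ^ 2 / 2)
      ≤ (1 / Real.sqrt (2 * Real.pi)) * Real.sqrt (2 * Real.pi) := by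
        apply mul_le_mul_of_nonneg_left (h2 ▸ h1) (by positivity)
    _ = 1 := by field_simp

lemma gauss_deriv_aux (t : ℝ) :
    HasDerivAt (fun t : ℝ => -Real.exp (-t ^ 2 / 2)) (t * Real.exp (-t ^ 2 / 2)) t := by
  have h : HasDerivAt (fun t : ℝ => -t ^ 2 / 2) (-t) t := by
    have := ((hasDerivAt_pow 2 t).neg.div_const 2)
    refine this.congr_deriv ?_
    simp; ring
  have := h.exp.neg
  refine this.congr_deriv ?_
  ring

lemma gauss_exp_tendsto : Tendsto (fun t : ℝ => Real.exp (-t ^ 2 / 2)) atTop (nhds 0) := by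
  have h1 : Tendsto (fun t : ℝ => -t ^ 2 / 2) atTop atBot := by
    have hp : Tendsto (fun t : ℝ => t ^ 2) atTop atTop := tendsto_pow_atTop two_ne_zero
    have h2 : Tendsto (fun t : ℝ => -t ^ 2) atTop atBot := tendsto_neg_atTop_atBot.comp hp
    exact h2.atBot_div_const two_pos
  exact Real.tendsto_exp_atBot.comp h1

lemma gaussQ_tail (x : ℝ) (hx : 1 ≤ x) : gaussQ x ≤ Real.exp (-x ^ 2 / 2) := by
  have hderiv : ∀ t ∈ Set.Ici x, HasDerivAt (fun t : ℝ => -Real.exp (-t ^ 2 / 2))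
      (t * Real.exp (-t ^ 2 / 2)) t := fun t _ => gauss_deriv_aux t
  have hpos : ∀ t ∈ Set.Ioi x, 0 ≤ t * Real.exp (-t ^ 2 / 2) := fun t ht => by
    have h0 : (0:ℝ) ≤ t := by have := Set.mem_Ioi.mp ht; linarith
    positivity
  have htend : Tendsto (fun t : ℝ => -Real.exp (-t ^ 2 / 2)) atTop (nhds 0) := by
    simpa using gauss_exp_tendsto.neg
  have hval := integral_Ioi_of_hasDerivAt_of_nonneg' hderiv hpos htend
  have hint := integrableOn_Ioi_deriv_of_nonneg' hderiv hpos htend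
  have hmono : (∫ t in Set.Ioi x, Real.exp (-t ^ 2 / 2)) ≤
      ∫ t in Set.Ioi x, t * Real.exp (-t ^ 2 / 2) := by
    apply setIntegral_mono_on gauss_integrable.integrableOn hint measurableSet_Ioi
    intro t ht
    nth_rewrite 1 [show Real.exp (-t ^ 2 / 2) = 1 * Real.exp (-t ^ 2 / 2) by ring]
    exact mul_le_mul_of_nonneg_right (le_of_lt (lt_of_le_of_lt hx ht)) (Real.exp_pos _).le
  have hc : 1 / Real.sqrt (2 * Real.pi) ≤ 1 := by
    rw [div_le_one sqrtpi_pos]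
    rw [show (1:ℝ) = Real.sqrt 1 by simp]
    apply Real.sqrt_le_sqrt
    nlinarith [Real.pi_gt_three]
  calc gaussQ x ≤ 1 * ∫ t in Set.Ioi x, t * Real.exp (-t ^ 2 / 2) := by
        rw [gaussQ]
        exact mul_le_mul hc hmono
          (setIntegral_nonneg measurableSet_Ioi fun t _ => (Real.exp_pos _).le) one_pos.le
    _ = Real.exp (-x ^ 2 / 2) := by rw [one_mul, hval]; simp

lemma gaussQ_tendsto_atTop : Tendsto gaussQ atTop (nhds 0) := by
  have h := intervalIntegral_tendsto_integral_Ioi 0 gauss_integrable.integrableOn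
    tendsto_id
  have h2 : Tendsto (fun x : ℝ => (1 / Real.sqrt (2 * Real.pi)) *
      ((∫ t in Set.Ioi (0:ℝ), Real.exp (-t ^ 2 / 2)) - ∫ t in (0:ℝ)..x, Real.exp (-t ^ 2 / 2)))
      atTop (nhds ((1 / Real.sqrt (2 * Real.pi)) *
      ((∫ t in Set.Ioi (0:ℝ), Real.exp (-t ^ 2 / 2)) - ∫ t in Set.Ioi (0:ℝ), Real.exp (-t ^ 2 / 2)))) :=
    (tendsto_const_nhds.sub h).const_mul _
  simp only [sub_self, mul_zero] at h2
  exact h2.congr fun x => by rw [gaussQ, gauss_split x]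

lemma gaussQ_tendsto_atBot : Tendsto gaussQ atBot (nhds 1) := by
  have h := intervalIntegral_tendsto_integral_Iic 0 gauss_integrable.integrableOn
    tendsto_id
  have h2 : Tendsto (fun x : ℝ => (1 / Real.sqrt (2 * Real.pi)) *
      ((∫ t in Set.Ioi (0:ℝ), Real.exp (-t ^ 2 / 2)) + ∫ t in x..(0:ℝ), Real.exp (-t ^ 2 / 2)))
      atBot (nhds ((1 / Real.sqrt (2 * Real.pi)) *
      ((∫ t in Set.Ioi (0:ℝ), Real.exp (-t ^ 2 / 2)) + ∫ t in Set.Iic (0:ℝ), Real.exp (-t ^ 2 / 2)))) :=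
    (tendsto_const_nhds.add h).const_mul _
  have htot : (∫ t in Set.Ioi (0:ℝ), Real.exp (-t ^ 2 / 2)) +
      ∫ t in Set.Iic (0:ℝ), Real.exp (-t ^ 2 / 2) = Real.sqrt (2 * Real.pi) := by
    rw [add_comm, intervalIntegral.integral_Iic_add_Ioi gauss_integrable.integrableOn gauss_integrable.integrableOn]
    have := integral_gaussian (1/2)
    rw [show Real.pi / (1/2) = 2 * Real.pi by ring] at this
    rw [← this]
    congr 1 with t; ring_nf
  rw [htot, one_div, inv_mul_cancel₀ sqrtpi_pos.ne'] at h2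
  exact h2.congr fun x => by
    rw [gaussQ, gauss_split x, intervalIntegral.integral_symm]
    ring

lemma exp_negsq_tendsto_atBot : Tendsto (fun a : ℝ => Real.exp (-a ^ 2 / 2)) atBot (nhds 0) := by
  have hp : Tendsto (fun a : ℝ => a ^ 2) atBot atTop := by
    have h1 : Tendsto (fun a : ℝ => (-a) ^ 2) atBot atTop :=
      (tendsto_pow_atTop two_ne_zero).comp tendsto_neg_atBot_atTop
    exact h1.congr fun a => by ring
  have h2 : Tendsto (fun a : ℝ => -a ^ 2 / 2) atBot atBot :=
    (tendsto_neg_atTop_atBot.comp hp).atBot_div_const two_pos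
  exact Real.tendsto_exp_atBot.comp h2

/-- For `b > 0`, `a ↦ C(a,b) = Q(a) + exp((2-2ab)/b²)·Q((2-ab)/b)` is strictly
decreasing, with limit `1` as `a → -∞` and `0` as `a → ∞`. -/
theorem stmt_19 (b : ℝ) (hb : 0 < b) :
    StrictAnti (fun a : ℝ =>
        gaussQ a + Real.exp ((2 - 2 * a * b) / b ^ 2) * gaussQ ((2 - a * b) / b)) ∧
    Tendsto (fun a : ℝ =>
        gaussQ a + Real.exp ((2 - 2 * a * b) / b ^ 2) * gaussQ ((2 - a * b) / b))
      atBot (nhds 1) ∧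
    Tendsto (fun a : ℝ =>
        gaussQ a + Real.exp ((2 - 2 * a * b) / b ^ 2) * gaussQ ((2 - a * b) / b))
      atTop (nhds 0) := by
  have hb0 : b ≠ 0 := hb.ne'
  -- derivative
  have hderiv : ∀ a : ℝ, HasDerivAt (fun a : ℝ =>
      gaussQ a + Real.exp ((2 - 2 * a * b) / b ^ 2) * gaussQ ((2 - a * b) / b))
      (-(2 / b * (Real.exp ((2 - 2 * a * b) / b ^ 2) * gaussQ ((2 - a * b) / b)))) a := by
    intro a
    have hu : HasDerivAt (fun a : ℝ => (2 - 2 * a * b) / b ^ 2) (-(2 * 1 * b) / b ^ 2) a :=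
      ((((hasDerivAt_id a).const_mul 2).mul_const b).const_sub 2).div_const _
    have hv : HasDerivAt (fun a : ℝ => (2 - a * b) / b) (-(1 * b) / b) a :=
      (((hasDerivAt_id a).mul_const b).const_sub 2).div_const _
    have hE := hu.exp
    have hQ2 : HasDerivAt (fun a : ℝ => gaussQ ((2 - a * b) / b))
        (-(1 / Real.sqrt (2 * Real.pi) * Real.exp (-((2 - a * b) / b) ^ 2 / 2)) *
          (-(1 * b) / b)) a :=
      (hasDerivAt_gaussQ ((2 - a * b) / b)).comp (h₂ := gaussQ) a hv
    have htot := (hasDerivAt_gaussQ a).add (hE.mul hQ2)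
    refine htot.congr_deriv (Eq.symm ?_)
    have hkey : Real.exp ((2 - 2 * a * b) / b ^ 2) *
        Real.exp (-((2 - a * b) / b) ^ 2 / 2) = Real.exp (-a ^ 2 / 2) := by
      rw [← Real.exp_add]
      congr 1
      field_simp
      ring
    have h2 : -(2 * 1 * b) / b ^ 2 = -2 / b := by field_simp
    have h3 : -(1 * b) / b = -1 := by field_simp
    rw [h2, h3]
    linear_combination (-(1 / Real.sqrt (2 * Real.pi))) * hkey
  refine ⟨?_, ?_, ?_⟩
  · apply strictAnti_of_deriv_neg
    intro a
    rw [(hderiv a).deriv]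
    have := mul_pos (Real.exp_pos ((2 - 2 * a * b) / b ^ 2)) (gaussQ_pos ((2 - a * b) / b))
    have h2b : (0:ℝ) < 2 / b := by positivity
    nlinarith
  · have h1 : Tendsto gaussQ atBot (nhds 1) := gaussQ_tendsto_atBot
    have h2 : Tendsto (fun a : ℝ =>
        Real.exp ((2 - 2 * a * b) / b ^ 2) * gaussQ ((2 - a * b) / b)) atBot (nhds 0) := by
      apply squeeze_zero'
      · exact Filter.Eventually.of_forall fun a =>
          (mul_pos (Real.exp_pos _) (gaussQ_pos _)).le
      · rw [Filter.eventually_atBot]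
        refine ⟨(2 - b) / b, fun a ha => ?_⟩
        have hv1 : 1 ≤ (2 - a * b) / b := by
          rw [le_div_iff₀ hb, one_mul]
          have : a * b ≤ (2 - b) / b * b := mul_le_mul_of_nonneg_right ha hb.le
          rw [div_mul_cancel₀ _ hb0] at this
          linarith
        calc Real.exp ((2 - 2 * a * b) / b ^ 2) * gaussQ ((2 - a * b) / b)
            ≤ Real.exp ((2 - 2 * a * b) / b ^ 2) * Real.exp (-((2 - a * b) / b) ^ 2 / 2) :=
              mul_le_mul_of_nonneg_left (gaussQ_tail _ hv1) (Real.exp_pos _).le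
          _ = Real.exp (-a ^ 2 / 2) := by
              rw [← Real.exp_add]; congr 1; field_simp; ring
      · exact exp_negsq_tendsto_atBot
    simpa using h1.add h2
  · have h1 : Tendsto gaussQ atTop (nhds 0) := gaussQ_tendsto_atTop
    have h2 : Tendsto (fun a : ℝ =>
        Real.exp ((2 - 2 * a * b) / b ^ 2) * gaussQ ((2 - a * b) / b)) atTop (nhds 0) := by
      apply squeeze_zero'
      · exact Filter.Eventually.of_forall fun a =>
          (mul_pos (Real.exp_pos _) (gaussQ_pos _)).le
      · refine Filter.Eventually.of_forall fun a => ?_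
        calc Real.exp ((2 - 2 * a * b) / b ^ 2) * gaussQ ((2 - a * b) / b)
            ≤ Real.exp ((2 - 2 * a * b) / b ^ 2) * 1 :=
              mul_le_mul_of_nonneg_left (gaussQ_le_one _) (Real.exp_pos _).le
          _ = Real.exp ((2 - 2 * a * b) / b ^ 2) := mul_one _
      · have hu : Tendsto (fun a : ℝ => (2 - 2 * a * b) / b ^ 2) atTop atBot := by
          have hm : Tendsto (fun a : ℝ => a * (2 * b)) atTop atTop :=
            tendsto_id.atTop_mul_const (by positivity)
          have hn : Tendsto (fun a : ℝ => 2 + -(a * (2 * b))) atTop atBot :=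
            tendsto_atBot_add_const_left _ 2 (tendsto_neg_atTop_atBot.comp hm)
          exact (hn.atBot_div_const (by positivity : (0:ℝ) < b ^ 2)).congr fun a => by ring
        exact Real.tendsto_exp_atBot.comp hu
    simpa using h1.add h2
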